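/- Exact privacy characterization of the Gaussian mechanism (one-dimensional form): let Δ > 0, σ > 0, ε ≥ 0, and δ ∈ [0,1]. Then the following are equivalent: (i) for every t ∈ ℝ with |t| ≤ Δ and every Borel set A ⊆ ℝ, N(t, σ²)(A) ≤ e^ε · N(0, σ²)(A) + δ; (ii) Φ(Δ/(2σ) − εσ/Δ) − e^ε · Φ(−Δ/(2σ) − εσ/Δ) ≤ δ. -/

import Mathlib

open MeasureTheory ProbabilityTheory

/-- The standard Gaussian cumulative distribution function
`Φ(t) = (2π)^{-1/2} ∫_{−∞}^t e^{−y²/2} dy`. -/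
noncomputable def gaussCDF (t : ℝ) : ℝ :=
  (Real.sqrt (2 * Real.pi))⁻¹ * ∫ y in Set.Iic t, Real.exp (-y ^ 2 / 2)

noncomputable def stdGauss (y : ℝ) : ℝ :=
  (Real.sqrt (2 * Real.pi))⁻¹ * Real.exp (-y ^ 2 / 2)

lemma stdGauss_pos (y : ℝ) : 0 < stdGauss y := by
  have := Real.pi_pos
  unfold stdGauss
  positivity

lemma continuous_stdGauss : Continuous stdGauss := by
  unfold stdGauss; fun_prop

lemma integrable_stdGauss : Integrable stdGauss := by
  have h : Integrable (fun x : ℝ => Real.exp (-(1/2) * x ^ 2)) := integrable_exp_neg_mul_sq (by norm_num)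
  have h2 : Integrable (fun x : ℝ => Real.exp (-x ^ 2 / 2)) := by
    convert h using 2 with x; ring_nf
  exact h2.const_mul _

lemma gaussCDF_eq (t : ℝ) : gaussCDF t = ∫ y in Set.Iic t, stdGauss y := by
  rw [gaussCDF]; unfold stdGauss; rw [MeasureTheory.integral_const_mul]

lemma gaussCDF_nonneg (t : ℝ) : 0 ≤ gaussCDF t := by
  rw [gaussCDF_eq]
  exact setIntegral_nonneg measurableSet_Iic (fun x _ => (stdGauss_pos x).le)

lemma integral_stdGauss : ∫ y, stdGauss y = 1 := by
  unfold stdGauss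
  rw [MeasureTheory.integral_const_mul]
  have h : ∫ y : ℝ, Real.exp (-y ^ 2 / 2) = Real.sqrt (2 * Real.pi) := by
    have := integral_gaussian (1/2)
    have heq : ∀ y : ℝ, Real.exp (-(1/2) * y ^ 2) = Real.exp (-y ^ 2 / 2) := by
      intro y; ring_nf
    simp_rw [heq] at this
    rw [this]
    norm_num [mul_comm]
  rw [h, inv_mul_cancel₀ (Real.sqrt_ne_zero'.mpr (by positivity))]

lemma gaussCDF_add_compl (x : ℝ) :
    gaussCDF x + ∫ y in Set.Ioi x, stdGauss y = 1 := by
  rw [gaussCDF_eq, ← integral_stdGauss]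
  have := MeasureTheory.integral_add_compl (s := Set.Iic x) measurableSet_Iic
    integrable_stdGauss
  rw [Set.compl_Iic] at this
  exact this

lemma gaussCDF_neg (x : ℝ) : gaussCDF (-x) = 1 - gaussCDF x := by
  have h1 : gaussCDF (-x) = ∫ y in Set.Ioi x, stdGauss y := by
    rw [gaussCDF_eq]
    have : ∀ y : ℝ, stdGauss y = stdGauss (-y) := by
      intro y; unfold stdGauss; rw [neg_pow]; ring_nf
    calc ∫ y in Set.Iic (-x), stdGauss y = ∫ y in Set.Iic (-x), stdGauss (-y) := by
          simp_rw [← this]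
      _ = ∫ y in Set.Ioi (-(-x)), stdGauss y := integral_comp_neg_Iic (-x) stdGauss
      _ = ∫ y in Set.Ioi x, stdGauss y := by rw [neg_neg]
  have h2 := gaussCDF_add_compl x
  linarith

lemma gaussCDF_le_one (t : ℝ) : gaussCDF t ≤ 1 := by
  have h := gaussCDF_add_compl t
  have : 0 ≤ ∫ y in Set.Ioi t, stdGauss y :=
    setIntegral_nonneg measurableSet_Ioi (fun x _ => (stdGauss_pos x).le)
  linarith

lemma hasDerivAt_gaussCDF (x : ℝ) : HasDerivAt gaussCDF (stdGauss x) x := by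
  have heq : gaussCDF = fun t => gaussCDF 0 + ∫ y in (0:ℝ)..t, stdGauss y := by
    funext t
    rw [gaussCDF_eq, gaussCDF_eq,
      ← intervalIntegral.integral_Iic_sub_Iic integrable_stdGauss.integrableOn
        integrable_stdGauss.integrableOn]
    ring
  rw [heq]
  exact (intervalIntegral.integral_hasDerivAt_right
    integrable_stdGauss.intervalIntegrable
    continuous_stdGauss.stronglyMeasurable.stronglyMeasurableAtFilter
    continuous_stdGauss.continuousAt).const_add _

lemma stdGauss_eq : stdGauss = fun y : ℝ => (Real.sqrt (2 * Real.pi))⁻¹ * Real.exp (-y ^ 2 / 2) := rfl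

set_option linter.unusedSectionVars false

section
variable {σ : ℝ} (hσ : 0 < σ)
include hσ

lemma vne : (⟨σ^2, sq_nonneg σ⟩ : NNReal) ≠ 0 := by
  intro h
  have h := congrArg Subtype.val h
  simp at h
  nlinarith

lemma gauss_map (t : ℝ) :
    gaussianReal t ⟨σ^2, sq_nonneg σ⟩ =
      Measure.map (fun x => σ * x + t) (gaussianReal 0 1) := by
  have h1 : Measure.map (σ * ·) (gaussianReal 0 1) =
      gaussianReal (σ * 0) (⟨σ^2, sq_nonneg σ⟩ * 1) := gaussianReal_map_const_mul σ
  have h2 : (fun x => σ * x + t) = (· + t) ∘ (σ * ·) := rfl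
  rw [h2, ← Measure.map_map (measurable_add_const t) (measurable_id'.const_mul σ), h1,
    gaussianReal_map_add_const t]
  exact congrArg₂ gaussianReal (by ring) (mul_one (M := NNReal) _).symm

lemma gauss_measure_Iic (t a : ℝ) :
    gaussianReal t ⟨σ^2, sq_nonneg σ⟩ (Set.Iic a) =
      ENNReal.ofReal (gaussCDF ((a - t) / σ)) := by
  rw [gauss_map hσ, Measure.map_apply ((measurable_id'.const_mul σ).add_const t)
    measurableSet_Iic]
  have hpre : (fun x => σ * x + t) ⁻¹' Set.Iic a = Set.Iic ((a - t) / σ) := by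
    ext x
    simp only [Set.mem_preimage, Set.mem_Iic]
    rw [le_div_iff₀ hσ]
    constructor <;> intro h <;> nlinarith
  rw [hpre, gaussianReal_apply_eq_integral 0 one_ne_zero]
  congr 1
  rw [gaussCDF_eq]
  apply setIntegral_congr_fun measurableSet_Iic
  intro y _
  show gaussianPDFReal 0 1 y = stdGauss y
  rw [gaussianPDFReal, stdGauss_eq]
  norm_num

lemma gauss_int_Iic (t a : ℝ) :
    ∫ x in Set.Iic a, gaussianPDFReal t ⟨σ^2, sq_nonneg σ⟩ x = gaussCDF ((a - t) / σ) := by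
  have h := gauss_measure_Iic hσ t a
  rw [gaussianReal_apply_eq_integral _ (vne hσ)] at h
  exact (ENNReal.ofReal_eq_ofReal_iff
    (setIntegral_nonneg measurableSet_Iic (fun x _ => gaussianPDFReal_nonneg _ _ _))
    (gaussCDF_nonneg _)).mp h

lemma gauss_int_total (t : ℝ) :
    ∫ x, gaussianPDFReal t ⟨σ^2, sq_nonneg σ⟩ x = 1 :=
  integral_gaussianPDFReal_eq_one t (vne hσ)

lemma gauss_int_Ioi (t a : ℝ) :
    ∫ x in Set.Ioi a, gaussianPDFReal t ⟨σ^2, sq_nonneg σ⟩ x = gaussCDF ((t - a) / σ) := by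
  have h1 := MeasureTheory.integral_add_compl (s := Set.Iic a) measurableSet_Iic
    (integrable_gaussianPDFReal t ⟨σ^2, sq_nonneg σ⟩)
  rw [Set.compl_Iic, gauss_int_Iic hσ, gauss_int_total hσ] at h1
  have h2 : (t - a) / σ = -((a - t) / σ) := by ring
  rw [h2, gaussCDF_neg]
  linarith

lemma gauss_int_Iio (t a : ℝ) :
    ∫ x in Set.Iio a, gaussianPDFReal t ⟨σ^2, sq_nonneg σ⟩ x = gaussCDF ((a - t) / σ) := by
  rw [← MeasureTheory.integral_Iic_eq_integral_Iio, gauss_int_Iic hσ]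

lemma gauss_measure_eq_ofReal (t : ℝ) (A : Set ℝ) :
    gaussianReal t ⟨σ^2, sq_nonneg σ⟩ A =
      ENNReal.ofReal (∫ x in A, gaussianPDFReal t ⟨σ^2, sq_nonneg σ⟩ x) :=
  gaussianReal_apply_eq_integral t (vne hσ) A

end

noncomputable def privFn (σ ε t : ℝ) : ℝ :=
  gaussCDF (t / (2 * σ) - ε * σ / t) - Real.exp ε * gaussCDF (-(t / (2 * σ)) - ε * σ / t)

section
variable {σ ε : ℝ} (hσ : 0 < σ) (hε : 0 ≤ ε)

lemma exp_stdGauss_id {t : ℝ} (ht : t ≠ 0) (hσ' : σ ≠ 0) :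
    Real.exp ε * stdGauss (-(t / (2 * σ)) - ε * σ / t) =
      stdGauss (t / (2 * σ) - ε * σ / t) := by
  rw [stdGauss_eq]
  simp only
  rw [mul_left_comm, ← Real.exp_add]
  congr 2
  field_simp
  ring

include hσ

lemma hasDerivAt_privFn {t : ℝ} (ht : 0 < t) :
    HasDerivAt (privFn σ ε) (stdGauss (t / (2 * σ) - ε * σ / t) / σ) t := by
  have hσ' : σ ≠ 0 := hσ.ne'
  have ht' : t ≠ 0 := ht.ne'
  have ha : HasDerivAt (fun u : ℝ => u / (2 * σ) - ε * σ / u)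
      (1 / (2 * σ) + ε * σ / t ^ 2) t := by
    have h1 : HasDerivAt (fun u : ℝ => u / (2 * σ)) (1 / (2 * σ)) t := by
      simpa using (hasDerivAt_id t).div_const (2 * σ)
    have h2 : HasDerivAt (fun u : ℝ => ε * σ / u) (ε * σ * (-(t ^ 2)⁻¹)) t := by
      simpa [div_eq_mul_inv] using (hasDerivAt_inv ht').const_mul (ε * σ)
    have := h1.sub h2
    refine this.congr_deriv ?_
    field_simp
    ring
  have hb : HasDerivAt (fun u : ℝ => -(u / (2 * σ)) - ε * σ / u)
      (-(1 / (2 * σ)) + ε * σ / t ^ 2) t := by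
    have h1 : HasDerivAt (fun u : ℝ => u / (2 * σ)) (1 / (2 * σ)) t := by
      simpa using (hasDerivAt_id t).div_const (2 * σ)
    have h2 : HasDerivAt (fun u : ℝ => ε * σ / u) (ε * σ * (-(t ^ 2)⁻¹)) t := by
      simpa [div_eq_mul_inv] using (hasDerivAt_inv ht').const_mul (ε * σ)
    have := h1.neg.sub h2
    refine this.congr_deriv ?_
    field_simp
    ring
  have hda := (hasDerivAt_gaussCDF (t / (2 * σ) - ε * σ / t)).comp t ha
  have hdb := ((hasDerivAt_gaussCDF (-(t / (2 * σ)) - ε * σ / t)).comp t hb).const_mul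
    (Real.exp ε)
  have hcomb := hda.sub hdb
  refine hcomb.congr_deriv ?_
  rw [← mul_assoc, exp_stdGauss_id (ε := ε) ht' hσ']
  field_simp
  ring

lemma privFn_mono {t Δ : ℝ} (ht : 0 < t) (htΔ : t ≤ Δ) :
    privFn σ ε t ≤ privFn σ ε Δ := by
  have hmono : StrictMonoOn (privFn σ ε) (Set.Ioi 0) := by
    apply strictMonoOn_of_deriv_pos (convex_Ioi 0)
    · intro x hx
      exact (hasDerivAt_privFn hσ hx).continuousAt.continuousWithinAt
    · intro x hx
      rw [interior_Ioi] at hx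
      rw [(hasDerivAt_privFn hσ hx).deriv]
      exact div_pos (stdGauss_pos _) hσ
  rcases eq_or_lt_of_le htΔ with rfl | hlt
  · exact le_rfl
  · exact (hmono (Set.mem_Ioi.2 ht) (Set.mem_Ioi.2 (ht.trans hlt)) hlt).le

end

section
variable {σ ε : ℝ} (hσ : 0 < σ)
include hσ

lemma mem_E_iff (t x : ℝ) :
    Real.exp ε * gaussianPDFReal 0 ⟨σ^2, sq_nonneg σ⟩ x <
        gaussianPDFReal t ⟨σ^2, sq_nonneg σ⟩ x ↔
      ε * σ ^ 2 + t ^ 2 / 2 < t * x := by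
  have hσ2 : (0:ℝ) < 2 * σ ^ 2 := by positivity
  have h2 : (0:ℝ) < 2 * σ ^ 2 := by positivity
  have hk : (0:ℝ) < (Real.sqrt (2 * Real.pi * σ ^ 2))⁻¹ := by
    have := Real.pi_pos; positivity
  unfold gaussianPDFReal
  simp only [NNReal.coe_mk, sub_zero]
  show Real.exp ε * ((Real.sqrt (2 * Real.pi * σ ^ 2))⁻¹ * Real.exp (-x ^ 2 / (2 * σ ^ 2))) <
      (Real.sqrt (2 * Real.pi * σ ^ 2))⁻¹ * Real.exp (-(x - t) ^ 2 / (2 * σ ^ 2)) ↔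
    ε * σ ^ 2 + t ^ 2 / 2 < t * x
  rw [mul_left_comm, mul_lt_mul_iff_right₀ hk, ← Real.exp_add, Real.exp_lt_exp]
  have h1 : ε + -x ^ 2 / (2 * σ ^ 2) = (ε * (2 * σ ^ 2) - x ^ 2) / (2 * σ ^ 2) := by
    field_simp
    ring
  rw [h1, div_lt_div_iff₀ h2 h2]
  constructor <;> intro h <;> nlinarith

lemma key_bound (hε : 0 ≤ ε) (t : ℝ) (ht : t ≠ 0) (A : Set ℝ) (hA : MeasurableSet A) :
    (∫ x in A, gaussianPDFReal t ⟨σ^2, sq_nonneg σ⟩ x) -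
        Real.exp ε * ∫ x in A, gaussianPDFReal 0 ⟨σ^2, sq_nonneg σ⟩ x ≤
      privFn σ ε |t| := by
  set v : NNReal := ⟨σ^2, sq_nonneg σ⟩ with hv
  set p : ℝ → ℝ → ℝ := fun t x => gaussianPDFReal t v x with hp
  set q : ℝ → ℝ := fun x => p t x - Real.exp ε * p 0 x with hqdef
  have hint : ∀ s : ℝ, Integrable (p s) := fun s => integrable_gaussianPDFReal s v
  have hq_int : Integrable q := (hint t).sub ((hint 0).const_mul _)
  set E : Set ℝ := {x | 0 < q x} with hE
  have hqmeas : Measurable q :=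
    (measurable_gaussianPDFReal t v).sub ((measurable_gaussianPDFReal 0 v).const_mul _)
  have hEmeas : MeasurableSet E := measurableSet_lt measurable_const hqmeas
  have hsplit : ∀ S : Set ℝ, MeasurableSet S →
      (∫ x in S, p t x) - Real.exp ε * ∫ x in S, p 0 x = ∫ x in S, q x := by
    intro S hS
    rw [hqdef]
    rw [integral_sub ((hint t).integrableOn) (((hint 0).const_mul _).integrableOn)]
    congr 1
    exact (MeasureTheory.integral_const_mul _ _).symm
  rw [hsplit A hA]
  have hstep : ∫ x in A, q x ≤ ∫ x in E, q x := by
    have hAeq : A ∩ E ∪ A \ E = A := Set.inter_union_diff A E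
    have hdisj : Disjoint (A ∩ E) (A \ E) :=
      Set.disjoint_left.mpr fun x hx1 hx2 => hx2.2 hx1.2
    have hsum : ∫ x in A, q x = (∫ x in A ∩ E, q x) + ∫ x in A \ E, q x := by
      rw [← setIntegral_union hdisj (hA.diff hEmeas) hq_int.integrableOn
        hq_int.integrableOn, hAeq]
    have hneg : ∫ x in A \ E, q x ≤ 0 := by
      apply setIntegral_nonpos (hA.diff hEmeas)
      intro x hx
      exact not_lt.mp hx.2
    have hmono : ∫ x in A ∩ E, q x ≤ ∫ x in E, q x := by
      apply setIntegral_mono_set hq_int.integrableOn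
      · filter_upwards [ae_restrict_mem hEmeas] with x hx
        exact (Set.mem_setOf_eq ▸ hx).le
      · exact HasSubset.Subset.eventuallyLE Set.inter_subset_right
    linarith
  refine hstep.trans ?_
  -- now compute ∫ over E
  set c : ℝ := (ε * σ ^ 2 + t ^ 2 / 2) / t with hc
  rcases ht.lt_or_gt with htneg | htpos
  · -- t < 0 : E = Iio c
    have hEeq : E = Set.Iio c := by
      ext x
      simp only [hE, Set.mem_setOf_eq, Set.mem_Iio, hqdef, sub_pos]
      rw [mem_E_iff hσ]
      rw [hc, lt_div_iff_of_neg htneg]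
      constructor <;> intro h <;> nlinarith
    rw [hEeq, ← hsplit _ measurableSet_Iio]
    show (∫ x in Set.Iio c, gaussianPDFReal t v x) -
        Real.exp ε * ∫ x in Set.Iio c, gaussianPDFReal 0 v x ≤ _
    rw [hv, gauss_int_Iio hσ, gauss_int_Iio hσ]
    have e1 : (c - t) / σ = |t| / (2 * σ) - ε * σ / |t| := by
      rw [abs_of_neg htneg, hc]
      field_simp [neg_ne_zero.mpr ht]
      ring
    have e2 : (c - 0) / σ = -(|t| / (2 * σ)) - ε * σ / |t| := by
      rw [abs_of_neg htneg, hc]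
      field_simp [neg_ne_zero.mpr ht]
      ring
    rw [e1, e2]
    exact le_rfl
  · -- 0 < t : E = Ioi c
    have hEeq : E = Set.Ioi c := by
      ext x
      simp only [hE, Set.mem_setOf_eq, Set.mem_Ioi, hqdef, sub_pos]
      rw [mem_E_iff hσ]
      rw [hc, div_lt_iff₀ htpos]
      constructor <;> intro h <;> nlinarith
    rw [hEeq, ← hsplit _ measurableSet_Ioi]
    show (∫ x in Set.Ioi c, gaussianPDFReal t v x) -
        Real.exp ε * ∫ x in Set.Ioi c, gaussianPDFReal 0 v x ≤ _
    rw [hv, gauss_int_Ioi hσ, gauss_int_Ioi hσ]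
    have e1 : (t - c) / σ = |t| / (2 * σ) - ε * σ / |t| := by
      rw [abs_of_pos htpos, hc]
      field_simp
      ring
    have e2 : (0 - c) / σ = -(|t| / (2 * σ)) - ε * σ / |t| := by
      rw [abs_of_pos htpos, hc]
      field_simp
      ring
    rw [e1, e2]
    exact le_rfl

end

/-- Exact privacy characterization of the one-dimensional Gaussian mechanism
(Balle–Wang): the `(ε, δ)` likelihood bound between `N(t, σ²)` (for all `|t| ≤ Δ`) and
`N(0, σ²)` holds iff `Φ(Δ/(2σ) − εσ/Δ) − e^ε Φ(−Δ/(2σ) − εσ/Δ) ≤ δ`. -/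
theorem gaussian_mechanism_privacy_iff
    (Δ σ ε δ : ℝ) (hΔ : 0 < Δ) (hσ : 0 < σ) (hε : 0 ≤ ε) (hδ₀ : 0 ≤ δ) (hδ₁ : δ ≤ 1) :
    (∀ t : ℝ, |t| ≤ Δ → ∀ A : Set ℝ, MeasurableSet A →
        gaussianReal t ⟨σ ^ 2, sq_nonneg σ⟩ A ≤
          ENNReal.ofReal (Real.exp ε) * gaussianReal 0 ⟨σ ^ 2, sq_nonneg σ⟩ A +
            ENNReal.ofReal δ) ↔
      gaussCDF (Δ / (2 * σ) - ε * σ / Δ) -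
          Real.exp ε * gaussCDF (-(Δ / (2 * σ)) - ε * σ / Δ) ≤ δ := by
  constructor
  · intro h
    set c : ℝ := (ε * σ ^ 2 + Δ ^ 2 / 2) / Δ with hc
    have hm := h Δ (le_of_eq (abs_of_pos hΔ)) (Set.Ioi c) measurableSet_Ioi
    rw [gauss_measure_eq_ofReal hσ, gauss_measure_eq_ofReal hσ, gauss_int_Ioi hσ,
      gauss_int_Ioi hσ] at hm
    have e1 : (Δ - c) / σ = Δ / (2 * σ) - ε * σ / Δ := by
      rw [hc]; field_simp; ring
    have e2 : (0 - c) / σ = -(Δ / (2 * σ)) - ε * σ / Δ := by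
      rw [hc]; field_simp; ring
    rw [e1, e2, ← ENNReal.ofReal_mul (Real.exp_pos ε).le,
      ← ENNReal.ofReal_add (mul_nonneg (Real.exp_pos ε).le (gaussCDF_nonneg _)) hδ₀] at hm
    have hr := (ENNReal.ofReal_le_ofReal_iff
      (add_nonneg (mul_nonneg (Real.exp_pos ε).le (gaussCDF_nonneg _)) hδ₀)).mp hm
    linarith
  · intro h t ht A hA
    rw [gauss_measure_eq_ofReal hσ, gauss_measure_eq_ofReal hσ]
    by_cases ht0 : t = 0
    · subst ht0
      calc ENNReal.ofReal (∫ x in A, gaussianPDFReal 0 ⟨σ ^ 2, sq_nonneg σ⟩ x)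
          ≤ ENNReal.ofReal (Real.exp ε) *
            ENNReal.ofReal (∫ x in A, gaussianPDFReal 0 ⟨σ ^ 2, sq_nonneg σ⟩ x) :=
            le_mul_of_one_le_left zero_le
              (ENNReal.one_le_ofReal.mpr (Real.one_le_exp hε))
        _ ≤ _ := le_self_add
    · have habs0 : 0 < |t| := abs_pos.mpr ht0
      have hb := key_bound hσ hε t ht0 A hA
      have hmono := privFn_mono hσ (ε := ε) habs0 ht
      have hPriv : privFn σ ε Δ ≤ δ := h
      have hreal : ∫ x in A, gaussianPDFReal t ⟨σ ^ 2, sq_nonneg σ⟩ x ≤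
          Real.exp ε * (∫ x in A, gaussianPDFReal 0 ⟨σ ^ 2, sq_nonneg σ⟩ x) + δ := by
        linarith
      calc ENNReal.ofReal (∫ x in A, gaussianPDFReal t ⟨σ ^ 2, sq_nonneg σ⟩ x)
          ≤ ENNReal.ofReal (Real.exp ε *
              (∫ x in A, gaussianPDFReal 0 ⟨σ ^ 2, sq_nonneg σ⟩ x) + δ) :=
            ENNReal.ofReal_le_ofReal hreal
        _ ≤ ENNReal.ofReal (Real.exp ε *
              (∫ x in A, gaussianPDFReal 0 ⟨σ ^ 2, sq_nonneg σ⟩ x)) + ENNReal.ofReal δ :=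
            ENNReal.ofReal_add_le
        _ = _ := by
            rw [ENNReal.ofReal_mul (Real.exp_pos ε).le]
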